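/- With G(d,h) the sandpile group of the d-regular tree of depth h and j a vertex at depth n (1 ≤ n ≤ h), the relation θ(d, h+2−n)·x̄_j − θ(d, h+1−n)·x̄_{p(j)} = 0 holds in G(d,h), where θ(d,m) := ((d−1)^m − 1)/(d−2) and x̄ denotes the image in G(d,h). -/

import Mathlib

namespace SandpileTree

/-- Vertices of the rooted `d`-regular tree of depth `h`: a depth `n ≤ h` together with
the path of steps from the root, padded with value `0` beyond the depth.
The step out of the root has `d` choices; each later step has `d - 1` choices. -/
def Vert (d h : ℕ) : Type :=
  {p : Fin (h + 1) × (Fin h → Fin d) //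
    (∀ i : Fin h, (p.1 : ℕ) ≤ (i : ℕ) → (p.2 i : ℕ) = 0) ∧
    (∀ i : Fin h, 0 < (i : ℕ) → (i : ℕ) < (p.1 : ℕ) → (p.2 i : ℕ) < d - 1)}

instance (d h : ℕ) : DecidableEq (Vert d h) := by unfold Vert; infer_instance
instance (d h : ℕ) : Fintype (Vert d h) := by unfold Vert; infer_instance

/-- The depth (distance from the root) of a vertex. -/
def depth {d h : ℕ} (v : Vert d h) : ℕ := (v.1.1 : ℕ)

/-- The root of the tree. -/
def root (d h : ℕ) (hd : 0 < d) : Vert d h :=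
  ⟨(0, fun _ => ⟨0, hd⟩), by constructor <;> intro i <;> simp⟩

/-- `IsParent i j` means that `i` is the parent of `j` in the rooted tree. -/
def IsParent {d h : ℕ} (i j : Vert d h) : Prop :=
  depth j = depth i + 1 ∧ ∀ k : Fin h, (k : ℕ) < depth i → j.1.2 k = i.1.2 k

instance {d h : ℕ} (i j : Vert d h) : Decidable (IsParent i j) := by
  unfold IsParent; infer_instance

/-- The row of the reduced Laplacian of the augmented tree corresponding to vertex `i`:
`δ i = d·x_i − x_{parent i} − ∑_{j child of i} x_j` (no parent term for the root, and
no children terms for the leaves, which are attached to the sink by `d-1` edges). -/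
def delta (d h : ℕ) (i : Vert d h) : Vert d h → ℤ :=
  (d : ℤ) • Pi.single i 1
    - ∑ j ∈ Finset.univ.filter (fun j => IsParent j i), Pi.single j 1
    - ∑ j ∈ Finset.univ.filter (fun j => IsParent i j), Pi.single j 1

/-- The lattice `Λ ⊆ ℤ^V` spanned by the rows of the reduced Laplacian. -/
def lat (d h : ℕ) : AddSubgroup (Vert d h → ℤ) :=
  AddSubgroup.closure (Set.range (delta d h))

/-- The sandpile group `G(d,h) = ℤ^V / Λ` of the `d`-regular tree of depth `h`. -/
abbrev SG (d h : ℕ) : Type := (Vert d h → ℤ) ⧸ lat d h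

/-- The image `x̄ᵢ` of the standard basis vector `xᵢ` in the sandpile group. -/
def xbar (d h : ℕ) (i : Vert d h) : SG d h :=
  QuotientAddGroup.mk (Pi.single i 1)

/-- `θ(d,n) = ((d-1)^n - 1)/(d-2)`. -/
def theta (d n : ℕ) : ℕ := ((d - 1) ^ n - 1) / (d - 2)

end SandpileTree

open SandpileTree

section Aux
variable {d h : ℕ}

lemma theta_zero (d : ℕ) : theta d 0 = 0 := by simp [theta]

lemma theta_succ (hd : 3 ≤ d) (k : ℕ) : theta d (k + 1) = (d - 1) * theta d k + 1 := by
  obtain ⟨c, hc⟩ : (d - 2) ∣ ((d - 1) ^ k - 1) := by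
    simpa [show d - 1 - 1 = d - 2 from by omega] using Nat.sub_dvd_pow_sub_pow (d - 1) 1 k
  have hpk : 1 ≤ (d - 1) ^ k := Nat.one_le_pow _ _ (by omega)
  have h1 : (d - 1) ^ k = (d - 2) * c + 1 := by omega
  have h2 : (d - 1) ^ (k + 1) = (d - 2) * ((d - 1) * c + 1) + 1 := by
    rw [pow_succ, h1]
    have hdd : d - 1 = (d - 2) + 1 := by omega
    rw [hdd]; ring
  unfold theta
  rw [hc, h2, Nat.mul_div_cancel_left _ (show 0 < d - 2 by omega)]
  have h3 : (d - 2) * ((d - 1) * c + 1) + 1 - 1 = (d - 2) * ((d - 1) * c + 1) := by omega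
  rw [h3, Nat.mul_div_cancel_left _ (show 0 < d - 2 by omega)]

lemma depth_le (v : Vert d h) : depth v ≤ h := Nat.lt_succ_iff.mp v.1.1.isLt

lemma Vert.ext' {v w : Vert d h} (h1 : depth v = depth w)
    (h2 : ∀ k : Fin h, (v.1.2 k : ℕ) = (w.1.2 k : ℕ)) : v = w := by
  apply Subtype.ext
  apply Prod.ext
  · exact Fin.ext h1
  · funext k; exact Fin.ext (h2 k)

lemma parent_unique {v i i' : Vert d h} (hi : IsParent i v) (hi' : IsParent i' v) :
    i = i' := by
  obtain ⟨hd1, hk1⟩ := hi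
  obtain ⟨hd2, hk2⟩ := hi'
  have hdep : depth i = depth i' := by omega
  refine Vert.ext' hdep (fun k => ?_)
  by_cases hlt : (k : ℕ) < depth i
  · rw [← hk1 k hlt, ← hk2 k (hdep ▸ hlt)]
  · rw [i.2.1 k (show depth i ≤ (k : ℕ) by omega),
      i'.2.1 k (show depth i' ≤ (k : ℕ) by omega)]

lemma filter_parents_eq {v i : Vert d h} (hi : IsParent i v) :
    Finset.univ.filter (fun j => IsParent j v) = {i} := by
  ext j
  simp only [Finset.mem_filter, Finset.mem_univ, true_and, Finset.mem_singleton]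
  exact ⟨fun hj => parent_unique hj hi, fun hj => hj ▸ hi⟩

/-- The step function of a child of `v`, indexed by `t : Fin (d-1)`. -/
def childFun (v : Vert d h) (hv : depth v < h) (t : Fin (d - 1)) : Fin h → Fin d :=
  Function.update v.1.2 ⟨depth v, hv⟩ ⟨(t : ℕ), by omega⟩

/-- A child of a vertex `v` of depth `< h`, indexed by `t : Fin (d-1)`. -/
def child (v : Vert d h) (hv : depth v < h) (t : Fin (d - 1)) : Vert d h :=
  ⟨(⟨depth v + 1, by omega⟩, childFun v hv t), by
    refine ⟨fun k hk => ?_, fun k hk0 hk1 => ?_⟩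
    · have hk' : depth v + 1 ≤ (k : ℕ) := hk
      have hne : k ≠ ⟨depth v, hv⟩ := by
        intro hkk; rw [hkk] at hk'; simp at hk'
      show (childFun v hv t k : ℕ) = 0
      rw [childFun, Function.update_of_ne hne]
      exact v.2.1 k (show depth v ≤ (k : ℕ) by omega)
    · have hk1' : (k : ℕ) < depth v + 1 := hk1
      show (childFun v hv t k : ℕ) < d - 1
      by_cases hke : (k : ℕ) = depth v
      · have hkk : k = ⟨depth v, hv⟩ := Fin.ext hke
        rw [hkk, childFun, Function.update_self]
        exact t.2
      · have hne : k ≠ ⟨depth v, hv⟩ := by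
          intro hkk; rw [hkk] at hke; simp at hke
        rw [childFun, Function.update_of_ne hne]
        exact v.2.2 k hk0 (show (k : ℕ) < depth v by omega)⟩

lemma depth_child (v : Vert d h) (hv : depth v < h) (t : Fin (d - 1)) :
    depth (child v hv t) = depth v + 1 := rfl

lemma child_isParent (v : Vert d h) (hv : depth v < h) (t : Fin (d - 1)) :
    IsParent v (child v hv t) := by
  refine And.intro rfl (fun k hk => ?_)
  have hne : k ≠ ⟨depth v, hv⟩ := by
    intro hkk; rw [hkk] at hk; simp at hk
  show childFun v hv t k = v.1.2 k
  rw [childFun, Function.update_of_ne hne]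

lemma child_injective (v : Vert d h) (hv : depth v < h) :
    Function.Injective (child v hv) := by
  intro t t' htt
  have h2 := congrArg (fun w : Vert d h => (w.1.2 ⟨depth v, hv⟩ : ℕ)) htt
  refine Fin.ext ?_
  simpa [child, childFun, Function.update_self] using h2

lemma child_surj {v w : Vert d h} (hv : depth v < h) (h1 : 1 ≤ depth v)
    (hw : IsParent v w) : ∃ t : Fin (d - 1), w = child v hv t := by
  obtain ⟨hdw, hkw⟩ := hw
  have htlt : (w.1.2 ⟨depth v, hv⟩ : ℕ) < d - 1 :=
    w.2.2 ⟨depth v, hv⟩ (show 0 < depth v by omega) (show depth v < depth w by omega)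
  refine ⟨⟨(w.1.2 ⟨depth v, hv⟩ : ℕ), htlt⟩, ?_⟩
  refine Vert.ext' (show depth w = depth v + 1 from hdw) (fun k => ?_)
  show (w.1.2 k : ℕ) = (childFun v hv _ k : ℕ)
  by_cases hke : (k : ℕ) = depth v
  · have hk' : k = ⟨depth v, hv⟩ := Fin.ext hke
    rw [hk', childFun, Function.update_self]
  · have hne : k ≠ ⟨depth v, hv⟩ := by
      intro hkk; rw [hkk] at hke; simp at hke
    rw [childFun, Function.update_of_ne hne]
    by_cases hlt : (k : ℕ) < depth v
    · rw [hkw k hlt]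
    · rw [w.2.1 k (show depth w ≤ (k : ℕ) by omega),
        v.2.1 k (show depth v ≤ (k : ℕ) by omega)]

lemma children_eq_image (v : Vert d h) (hv : depth v < h) (h1 : 1 ≤ depth v) :
    Finset.univ.filter (fun j => IsParent v j) = Finset.image (child v hv) Finset.univ := by
  ext w
  simp only [Finset.mem_filter, Finset.mem_univ, true_and, Finset.mem_image]
  constructor
  · intro hw
    obtain ⟨t, ht⟩ := child_surj hv h1 hw
    first
    | exact ⟨t, trivial, ht.symm⟩
    | exact ⟨t, ht.symm⟩
  · rintro ⟨t, -, rfl⟩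
    exact child_isParent v hv t

lemma children_card (v : Vert d h) (hv : depth v < h) (h1 : 1 ≤ depth v) :
    (Finset.univ.filter (fun j => IsParent v j)).card = d - 1 := by
  rw [children_eq_image v hv h1,
    Finset.card_image_of_injective _ (child_injective v hv)]
  simp

lemma children_empty (v : Vert d h) (hv : depth v = h) :
    Finset.univ.filter (fun j => IsParent v j) = ∅ := by
  ext w
  simp only [Finset.mem_filter, Finset.mem_univ, true_and, Finset.notMem_empty,
    iff_false]
  intro hw
  have h1 : depth w = depth v + 1 := hw.1
  have h2 : depth w ≤ h := depth_le w
  omega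

lemma delta_rel (d h : ℕ) (v : Vert d h) :
    (d : ℤ) • xbar d h v
      - ∑ j ∈ Finset.univ.filter (fun j => IsParent j v), xbar d h j
      - ∑ j ∈ Finset.univ.filter (fun j => IsParent v j), xbar d h j = 0 := by
  have hmem : delta d h v ∈ lat d h := AddSubgroup.subset_closure ⟨v, rfl⟩
  have h0 : (QuotientAddGroup.mk' (lat d h)) (delta d h v) = 0 :=
    (QuotientAddGroup.eq_zero_iff _).mpr hmem
  rw [delta, map_sub, map_sub, map_zsmul, map_sum, map_sum] at h0
  simpa [xbar] using h0

end Aux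
lemma key_rel (d h : ℕ) (hd : 3 ≤ d) :
    ∀ t (v i : Vert d h), h - depth v = t → 1 ≤ depth v → IsParent i v →
      (theta d (t + 2) : ℤ) • xbar d h v = (theta d (t + 1) : ℤ) • xbar d h i := by
  intro t
  induction t with
  | zero =>
    intro v i ht h1 hi
    have hvh : depth v = h := by have := depth_le v; omega
    have hrel := delta_rel d h v
    rw [filter_parents_eq hi, Finset.sum_singleton, children_empty v hvh,
      Finset.sum_empty, sub_zero, sub_eq_zero] at hrel
    have h1' : theta d 1 = 1 := by
      have e1 : theta d 1 = (d - 1) * theta d 0 + 1 := theta_succ hd 0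
      rw [theta_zero] at e1; omega
    have h2' : theta d 2 = d := by
      have e2 : theta d 2 = (d - 1) * theta d 1 + 1 := theta_succ hd 1
      rw [h1'] at e2; omega
    rw [h1', h2']
    simpa using hrel
  | succ t ih =>
    intro v i ht h1 hi
    have hvlt : depth v < h := by omega
    have hrel := delta_rel d h v
    rw [filter_parents_eq hi, Finset.sum_singleton, sub_sub, sub_eq_zero] at hrel
    have hchild : ∀ c ∈ Finset.univ.filter (fun j => IsParent v j),
        (theta d (t + 2) : ℤ) • xbar d h c = (theta d (t + 1) : ℤ) • xbar d h v := by
      intro c hc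
      rw [Finset.mem_filter] at hc
      have hdc : depth c = depth v + 1 := hc.2.1
      exact ih c v (by omega) (by omega) hc.2
    have hsum : (theta d (t + 2) : ℤ) • (∑ j ∈ Finset.univ.filter (fun j => IsParent v j),
        xbar d h j) = (((d - 1 : ℕ) : ℤ) * (theta d (t + 1) : ℤ)) • xbar d h v := by
      rw [Finset.smul_sum (r := (theta d (t + 2) : ℤ)) (f := fun j => xbar d h j)
        (s := Finset.univ.filter (fun j => IsParent v j)), Finset.sum_congr rfl hchild, Finset.sum_const,
        children_card v hvlt h1, ← natCast_zsmul, smul_smul]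
    have hmain : ((theta d (t + 2) : ℤ) * d) • xbar d h v
        = (theta d (t + 2) : ℤ) • xbar d h i
          + (((d - 1 : ℕ) : ℤ) * (theta d (t + 1) : ℤ)) • xbar d h v := by
      rw [← smul_smul, hrel, zsmul_add, hsum]
    have hco : theta d (t + 3) + (d - 1) * theta d (t + 1) = d * theta d (t + 2) := by
      have e1 := theta_succ hd (t + 2)
      have e2 := theta_succ hd (t + 1)
      obtain ⟨e, he⟩ : ∃ e, d = e + 1 := ⟨d - 1, by omega⟩
      have hde : d - 1 = e := by omega
      rw [hde] at e1 e2 ⊢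
      rw [show t + 3 = t + 2 + 1 from rfl] at e1
      rw [e1, e2, he]
      ring
    have hcoZ : (theta d (t + 1 + 2) : ℤ)
        = (theta d (t + 2) : ℤ) * d - ((d - 1 : ℕ) : ℤ) * (theta d (t + 1) : ℤ) := by
      have hcast := congrArg (fun n : ℕ => (n : ℤ)) hco
      push_cast at hcast
      rw [show t + 1 + 2 = t + 3 from rfl]
      linarith
    rw [hcoZ, sub_smul, hmain]
    abel


/-- In the sandpile group `G(d,h)` of the `d`-regular tree of depth `h`, for a vertex `j`
at depth `n` (`1 ≤ n ≤ h`) with parent `i = p(j)`, the relation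
`θ(d, h+2−n)·x̄_j − θ(d, h+1−n)·x̄_{p(j)} = 0` holds. -/
theorem parent_relation (d h n : ℕ) (hd : 3 ≤ d) (hn : 1 ≤ n) (hnh : n ≤ h)
    (j i : Vert d h) (hj : depth j = n) (hij : IsParent i j) :
    (theta d (h + 2 - n) : ℤ) • xbar d h j - (theta d (h + 1 - n) : ℤ) • xbar d h i = 0 := by
  subst hj
  have key := key_rel d h hd (h - depth j) j i rfl hn hij
  rw [show h + 2 - depth j = h - depth j + 2 from by omega,
    show h + 1 - depth j = h - depth j + 1 from by omega, sub_eq_zero]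
  exact key
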